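/- For n a positive integer, let μ_n = p_n δ_{x_n} + q_n δ_{y_n} with p_n = (√(1+4n)+1)/(2√(1+4n)), q_n = (√(1+4n)-1)/(2√(1+4n)), x_n = (1-√(1+4n))/√(4n), y_n = (1+√(1+4n))/√(4n). Then the Lévy distance between μ_n and b = (1/2)δ_{-1} + (1/2)δ_1 is at least 1/(6√n). -/

import Mathlib

open MeasureTheory ProbabilityTheory Set
open scoped ENNReal

/-- The Lévy distance between two probability measures on ℝ, defined via their
cumulative distribution functions. -/
noncomputable def levyDist (μ ν : Measure ℝ) : ℝ :=
  sInf {ε : ℝ | 0 < ε ∧ ∀ x : ℝ,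
    cdf μ (x - ε) - ε ≤ cdf ν x ∧ cdf ν x ≤ cdf μ (x + ε) + ε}

/-- The symmetric Bernoulli distribution `b = (1/2)δ₋₁ + (1/2)δ₁`. -/
noncomputable def bern : Measure ℝ :=
  (2 : ℝ≥0∞)⁻¹ • Measure.dirac (-1) + (2 : ℝ≥0∞)⁻¹ • Measure.dirac 1

instance : IsProbabilityMeasure bern := by
  constructor
  simp [bern]
  rw [← two_mul, ENNReal.mul_inv_cancel] <;> norm_num

lemma bern_cdf (z : ℝ) (h1 : -1 ≤ z) (h2 : z < 1) : cdf bern z = 1/2 := by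
  rw [cdf_eq_real, measureReal_def]
  have : bern (Iic z) = 2⁻¹ := by
    simp only [bern, Measure.add_apply, Measure.smul_apply, smul_eq_mul,
      Measure.dirac_apply' _ measurableSet_Iic]
    rw [indicator_of_mem (by simpa using h1), indicator_of_notMem (by simpa using h2.not_ge)]
    simp
  rw [this]
  simp [ENNReal.toReal_inv]

theorem levy_dist_two_point_measure_ge (n : ℕ) (hn : 0 < n) (μ : Measure ℝ)
    (hμ : μ = ENNReal.ofReal ((Real.sqrt (1 + 4 * n) + 1) / (2 * Real.sqrt (1 + 4 * n))) •
          Measure.dirac ((1 - Real.sqrt (1 + 4 * n)) / Real.sqrt (4 * n))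
        + ENNReal.ofReal ((Real.sqrt (1 + 4 * n) - 1) / (2 * Real.sqrt (1 + 4 * n))) •
          Measure.dirac ((1 + Real.sqrt (1 + 4 * n)) / Real.sqrt (4 * n))) :
    levyDist μ bern ≥ 1 / (6 * Real.sqrt n) := by
  subst hμ
  set s := Real.sqrt (1 + 4 * n) with hs_def
  set t := Real.sqrt (4 * n) with ht_def
  have hn1 : (1 : ℝ) ≤ n := by exact_mod_cast hn
  have hs1 : 1 < s := by
    rw [hs_def, show (1:ℝ) < Real.sqrt (1 + 4 * n) ↔ _ from Real.lt_sqrt (by norm_num)]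
    nlinarith
  have hs0 : 0 < s := by linarith
  have hssq : s ^ 2 = 1 + 4 * n := Real.sq_sqrt (by positivity)
  have ht0 : 0 < t := Real.sqrt_pos.mpr (by positivity)
  have htsq : t ^ 2 = 4 * n := Real.sq_sqrt (by positivity)
  have hrn0 : (0:ℝ) < Real.sqrt n := Real.sqrt_pos.mpr (by exact_mod_cast hn)
  have hrn1 : (1:ℝ) ≤ Real.sqrt n := Real.one_le_sqrt.mpr hn1
  set p : ℝ := (s + 1) / (2 * s) with hp_def
  set q : ℝ := (s - 1) / (2 * s) with hq_def
  set x₀ : ℝ := (1 - s) / t with hx_def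
  set y₀ : ℝ := (1 + s) / t with hy_def
  have hp0 : 0 ≤ p := by positivity
  have hq0 : 0 ≤ q := by
    apply div_nonneg (by linarith) (by linarith)
  have hpq : p + q = 1 := by
    rw [hp_def, hq_def, ← add_div, show s + 1 + (s - 1) = 2 * s by ring]
    exact div_self (by positivity)
  have hx0 : x₀ < 0 := div_neg_of_neg_of_pos (by linarith) ht0
  have hxm1 : -1 < x₀ := by
    rw [hx_def, lt_div_iff₀ ht0]
    nlinarith [sq_nonneg (t - s + 1)]
  have hxy : x₀ < y₀ := by
    rw [hx_def, hy_def, div_lt_div_iff₀ ht0 ht0]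
    nlinarith
  -- probability measure instance
  have hμprob : IsProbabilityMeasure
      (ENNReal.ofReal p • Measure.dirac x₀ + ENNReal.ofReal q • Measure.dirac y₀) := by
    constructor
    simp only [Measure.add_apply, Measure.smul_apply, smul_eq_mul, measure_univ, mul_one]
    rw [← ENNReal.ofReal_add hp0 hq0, hpq, ENNReal.ofReal_one]
  haveI := hμprob
  set μ' := ENNReal.ofReal p • Measure.dirac x₀ + ENNReal.ofReal q • Measure.dirac y₀ with hμ'_def
  have hμcdf : cdf μ' x₀ = p := by
    rw [cdf_eq_real, measureReal_def]
    have hIic : μ' (Iic x₀) = ENNReal.ofReal p := by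
      simp only [hμ'_def, Measure.add_apply, Measure.smul_apply, smul_eq_mul,
        Measure.dirac_apply' _ measurableSet_Iic]
      rw [indicator_of_mem (by simp), indicator_of_notMem (by simpa using hxy.not_ge)]
      simp
    rw [hIic, ENNReal.toReal_ofReal hp0]
  rw [ge_iff_le, levyDist]
  apply le_csInf
  · refine ⟨2, by norm_num, fun x => ⟨?_, ?_⟩⟩
    · linarith [cdf_le_one μ' (x - 2), cdf_nonneg bern x]
    · linarith [cdf_le_one bern x, cdf_nonneg μ' (x + 2)]
  rintro ε ⟨hε, hε2⟩
  by_contra hlt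
  push_neg at hlt
  have hrnsq : Real.sqrt n ^ 2 = n := Real.sq_sqrt (by positivity)
  have hε1 : ε < 1 := by
    have h6 : 1 / (6 * Real.sqrt n) ≤ 1 / 6 :=
      one_div_le_one_div_of_le (by norm_num) (by nlinarith)
    linarith
  have key := (hε2 (x₀ + ε)).1
  rw [add_sub_cancel_right, hμcdf, bern_cdf _ (by linarith) (by linarith)] at key
  have hs3 : s ≤ 3 * Real.sqrt n := by
    nlinarith [mul_pos hs0 hrn0, sq_nonneg (3 * Real.sqrt n - s)]
  have h1 : 1 / (6 * Real.sqrt n) ≤ 1 / (2 * s) :=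
    one_div_le_one_div_of_le (by positivity) (by linarith)
  have hp_half : p - 1 / 2 = 1 / (2 * s) := by
    rw [hp_def]; field_simp; ring
  linarith
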